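/- For every real v > 0 and all α > 0, c > 0, t > 0, ∫_0^t Γ(v+1) · (2/(αcs))^v · J_v(αcs) · (1/(π√(s(t−s)))) ds = (v/π) · ∫_0^1 z^{−1/2}(1−z)^{−1/2} · ( ∫_0^1 (1−w)^{v−1} · J_0(αctz√w) dw ) dz. (This is the conditional characteristic function of the random motion X_m at the Brownian sojourn time Γ(t) = ∫_0^t 1_{B(s)>0} ds, given n Poisson events, with v = n/2 or v = n+1; it shows X_m(Γ(t)) equals in distribution X_0 run for the random time Γ(t)√W with W ∼ Beta(1, v).) -/

import Mathlib

open MeasureTheory Real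

/-- The Bessel function of the first kind of order `ν`, defined by its series
(so that `J_0(0) = 1`). -/
noncomputable def besselJ (ν x : ℝ) : ℝ :=
  ∑' k : ℕ, (-1 : ℝ) ^ k * (x / 2) ^ (2 * (k : ℝ) + ν) /
    (Real.Gamma ((k : ℝ) + 1) * Real.Gamma ((k : ℝ) + ν + 1))

lemma beta_nat (k : ℕ) {v : ℝ} (hv : 0 < v) :
    ∫ w in (0:ℝ)..1, w ^ k * (1 - w) ^ (v - 1)
      = (k.factorial : ℝ) * Real.Gamma v / Real.Gamma ((k:ℝ) + v + 1) := by
  have key := Complex.Gamma_mul_Gamma_eq_betaIntegral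
    (s := (k:ℂ) + 1) (t := (v:ℂ)) (by simp; positivity) (by simpa using hv)
  have hbeta : Complex.betaIntegral ((k:ℂ) + 1) (v:ℂ)
      = ((∫ w in (0:ℝ)..1, w ^ k * (1 - w) ^ (v - 1) : ℝ) : ℂ) := by
    rw [Complex.betaIntegral, ← intervalIntegral.integral_ofReal]
    apply intervalIntegral.integral_congr
    intro w hw
    rw [Set.uIcc_of_le (by norm_num : (0:ℝ) ≤ 1)] at hw
    have h1 : (0:ℝ) ≤ 1 - w := by linarith [hw.2]
    show (w:ℂ) ^ ((k:ℂ) + 1 - 1) * ((1:ℂ) - (w:ℂ)) ^ ((v:ℂ) - 1) = ((w ^ k * (1 - w) ^ (v - 1) : ℝ) : ℂ)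
    rw [show ((1:ℂ) - (w:ℂ)) = (((1 - w : ℝ)):ℂ) by push_cast; ring,
      show ((v:ℂ) - 1) = (((v - 1 : ℝ)):ℂ) by push_cast; ring,
      ← Complex.ofReal_cpow h1,
      show ((k:ℂ) + 1 - 1) = ((k:ℕ):ℂ) by ring, Complex.cpow_natCast]
    push_cast
    ring
  rw [hbeta] at key
  have hΓ : Complex.Gamma ((k:ℂ) + 1 + (v:ℂ)) = (Real.Gamma ((k:ℝ) + v + 1) : ℂ) := by
    rw [show ((k:ℂ) + 1 + (v:ℂ)) = (((k:ℝ) + v + 1 : ℝ) : ℂ) by push_cast; ring,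
      Complex.Gamma_ofReal]
  have hΓ1 : Complex.Gamma ((k:ℂ) + 1) = ((k.factorial : ℝ) : ℂ) := by
    rw [Complex.Gamma_nat_eq_factorial k]; norm_cast
  rw [hΓ, hΓ1, Complex.Gamma_ofReal] at key
  have key' : (k.factorial : ℝ) * Real.Gamma v
      = Real.Gamma ((k:ℝ) + v + 1) * ∫ w in (0:ℝ)..1, w ^ k * (1 - w) ^ (v - 1) := by
    exact_mod_cast key
  have hpos : 0 < Real.Gamma ((k:ℝ) + v + 1) := Real.Gamma_pos_of_pos (by positivity)
  field_simp [key']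
  linarith [key']

lemma besselJ0_sqrt (x : ℝ) {w : ℝ} (hw : 0 ≤ w) :
    besselJ 0 (x * Real.sqrt w)
      = ∑' k : ℕ, ((-1:ℝ)^k * (x/2)^(2*k) / ((k.factorial : ℝ) * k.factorial)) * w ^ k := by
  rw [besselJ]
  apply tsum_congr
  intro k
  rw [show (2*(k:ℝ) + 0) = ((2*k : ℕ):ℝ) by push_cast; ring, Real.rpow_natCast,
    show (k:ℝ) + 0 + 1 = (k:ℝ) + 1 by ring, Real.Gamma_nat_eq_factorial,
    show x * Real.sqrt w / 2 = (x/2) * Real.sqrt w by ring, mul_pow, pow_mul, pow_mul,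
    Real.sq_sqrt hw]
  ring

lemma sonine {v x : ℝ} (hv : 0 < v) (hx : 0 < x) :
    Real.Gamma (v+1) * (2/x)^v * besselJ v x
      = v * ∫ w in (0:ℝ)..1, (1-w)^(v-1) * besselJ 0 (x * Real.sqrt w) := by
  set d : ℕ → ℝ := fun k => (-1:ℝ)^k * (x/2)^(2*k) / ((k.factorial : ℝ) * k.factorial) with hd
  set F : ℕ → ℝ → ℝ := fun k w => d k * (w^k * (1-w)^(v-1)) with hF
  -- interval integrability of the base function
  have hbase : ∀ k : ℕ, IntervalIntegrable (fun w => w^k * (1-w)^(v-1)) volume 0 1 := by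
    intro k
    have h1 : IntervalIntegrable (fun w : ℝ => w ^ (v-1)) volume 0 1 :=
      intervalIntegral.intervalIntegrable_rpow' (by linarith)
    have h2 : IntervalIntegrable (fun w : ℝ => (1-w) ^ (v-1)) volume 0 1 := by
      have := h1.comp_sub_left 1
      simpa using this.symm
    exact h2.continuousOn_mul (by fun_prop)
  have hInt : ∀ k : ℕ, Integrable (F k) (volume.restrict (Set.Ioc (0:ℝ) 1)) := by
    intro k
    have := (hbase k).const_mul (d k)
    rw [intervalIntegrable_iff_integrableOn_Ioc_of_le (by norm_num : (0:ℝ) ≤ 1)] at this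
    exact this
  have hIoc : ∀ k : ℕ, ∫ w in Set.Ioc (0:ℝ) 1, F k w
      = d k * ((k.factorial : ℝ) * Real.Gamma v / Real.Gamma ((k:ℝ) + v + 1)) := by
    intro k
    rw [← intervalIntegral.integral_of_le (by norm_num : (0:ℝ) ≤ 1),
      intervalIntegral.integral_const_mul, beta_nat k hv]
  -- the value 1/v of the k = 0 beta integral
  have hB0 : ∫ w in Set.Ioc (0:ℝ) 1, (1-w)^(v-1) = 1/v := by
    have h0 : ∫ w in Set.Ioc (0:ℝ) 1, (1-w)^(v-1) = ∫ w in Set.Ioc (0:ℝ) 1, F 0 w := by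
      apply setIntegral_congr_fun measurableSet_Ioc
      intro w _
      simp [hF, hd]
    rw [h0, hIoc 0]
    simp only [hd, pow_zero, mul_zero, one_mul, Nat.factorial_zero, Nat.cast_one, Nat.cast_zero]
    rw [show ((0:ℝ) + v + 1) = v + 1 by ring, Real.Gamma_add_one hv.ne']
    have hΓv := (Real.Gamma_pos_of_pos hv).ne'
    field_simp
  -- summability of integrals of norms
  have habs : ∀ k : ℕ, |d k| = (x/2)^(2*k) / ((k.factorial : ℝ) * k.factorial) := by
    intro k
    rw [hd]
    rw [abs_div, abs_mul, abs_pow, abs_neg, abs_one, one_pow, one_mul,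
      abs_of_nonneg (by positivity : (0:ℝ) ≤ (x/2)^(2*k)),
      abs_of_nonneg (by positivity : (0:ℝ) ≤ (k.factorial : ℝ) * k.factorial)]
  have hnormle : ∀ k : ℕ, (∫ w in Set.Ioc (0:ℝ) 1, ‖F k w‖) ≤ (1/v) * ((x/2)^2)^k / k.factorial := by
    intro k
    have hmono : (∫ w in Set.Ioc (0:ℝ) 1, ‖F k w‖)
        ≤ ∫ w in Set.Ioc (0:ℝ) 1, |d k| * (1-w)^(v-1) := by
      apply setIntegral_mono_on ((hInt k).norm)
      · have := (hbase 0).const_mul |d k|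
        rw [intervalIntegrable_iff_integrableOn_Ioc_of_le (by norm_num : (0:ℝ) ≤ 1)] at this
        apply this.congr_fun ?_ measurableSet_Ioc
        intro w _
        simp
      · exact measurableSet_Ioc
      · intro w hw
        have hw1 : 0 ≤ 1 - w := by linarith [hw.2]
        have hwk : w^k ≤ 1 := pow_le_one₀ hw.1.le hw.2
        rw [hF, Real.norm_eq_abs, abs_mul, abs_mul, abs_pow,
          abs_of_nonneg hw.1.le, abs_of_nonneg (Real.rpow_nonneg hw1 _)]
        have h1 : |d k| * (w^k * (1-w)^(v-1)) ≤ |d k| * (1 * (1-w)^(v-1)) := by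
          apply mul_le_mul_of_nonneg_left _ (abs_nonneg _)
          exact mul_le_mul_of_nonneg_right hwk (Real.rpow_nonneg hw1 _)
        calc |d k| * (w^k * (1-w)^(v-1)) ≤ |d k| * (1 * (1-w)^(v-1)) := h1
          _ = |d k| * (1-w)^(v-1) := by ring
    have heval : ∫ w in Set.Ioc (0:ℝ) 1, |d k| * (1-w)^(v-1) = |d k| * (1/v) := by
      rw [integral_const_mul, hB0]
    have hfac1 : (1:ℝ) ≤ (k.factorial : ℝ) := by exact_mod_cast k.factorial_pos
    have hstep : (x/2:ℝ)^(2*k)/((k.factorial:ℝ)*k.factorial) ≤ (x/2)^(2*k)/(k.factorial:ℝ) := by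
      gcongr
      nlinarith [hfac1]
    have hbound : |d k| * (1/v) ≤ (1/v) * ((x/2)^2)^k / k.factorial := by
      calc |d k| * (1/v) = (1/v) * ((x/2)^(2*k)/((k.factorial:ℝ)*k.factorial)) := by
            rw [habs k]; ring
        _ ≤ (1/v) * ((x/2)^(2*k)/(k.factorial:ℝ)) :=
            mul_le_mul_of_nonneg_left hstep (by positivity)
        _ = (1/v) * ((x/2)^2)^k / k.factorial := by rw [← pow_mul]; ring
    calc (∫ w in Set.Ioc (0:ℝ) 1, ‖F k w‖) ≤ |d k| * (1/v) := by rw [← heval]; exact hmono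
      _ ≤ (1/v) * ((x/2)^2)^k / k.factorial := hbound
  have hsum : Summable (fun k : ℕ => ∫ w in Set.Ioc (0:ℝ) 1, ‖F k w‖) := by
    apply Summable.of_nonneg_of_le
      (fun k => integral_nonneg (fun w => norm_nonneg _)) hnormle
    have := (Real.summable_pow_div_factorial ((x/2)^2)).mul_left (1/v)
    apply this.congr
    intro k
    rw [mul_div_assoc]
  -- the series for the weighted Bessel J₀ under the integral
  have hpt : Set.EqOn (fun w => (1-w)^(v-1) * besselJ 0 (x * Real.sqrt w))
      (fun w => ∑' k : ℕ, F k w) (Set.Ioc (0:ℝ) 1) := by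
    intro w hw
    have hw0 : (0:ℝ) ≤ w := hw.1.le
    show (1-w)^(v-1) * besselJ 0 (x * Real.sqrt w) = ∑' k : ℕ, F k w
    rw [besselJ0_sqrt x hw0, ← tsum_mul_left]
    apply tsum_congr
    intro k
    rw [hF, hd]
    ring
  -- swap integral and sum
  have hswap := MeasureTheory.integral_tsum_of_summable_integral_norm hInt hsum
  rw [intervalIntegral.integral_of_le (by norm_num : (0:ℝ) ≤ 1),
    setIntegral_congr_fun measurableSet_Ioc hpt, ← hswap]
  -- evaluate the sum
  rw [besselJ]
  rw [show Real.Gamma (v+1) * (2/x)^v * (∑' k : ℕ, (-1:ℝ)^k * (x/2)^(2*(k:ℝ)+v) /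
      (Real.Gamma ((k:ℝ)+1) * Real.Gamma ((k:ℝ)+v+1)))
    = ∑' k : ℕ, Real.Gamma (v+1) * (2/x)^v * ((-1:ℝ)^k * (x/2)^(2*(k:ℝ)+v) /
      (Real.Gamma ((k:ℝ)+1) * Real.Gamma ((k:ℝ)+v+1))) by
      rw [← tsum_mul_left]]
  rw [← tsum_mul_left]
  apply tsum_congr
  intro k
  rw [hIoc k]
  have hx2 : (0:ℝ) < x/2 := by linarith
  have e1 : (x/2 : ℝ) ^ (2*(k:ℝ)+v) = (x/2)^(2*k : ℕ) * (x/2)^v := by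
    rw [Real.rpow_add hx2, show (2*(k:ℝ)) = ((2*k : ℕ):ℝ) by push_cast; ring,
      Real.rpow_natCast]
  have e2 : ((2:ℝ)/x)^v * (x/2)^v = 1 := by
    rw [← Real.mul_rpow (by positivity) (by positivity),
      show (2/x) * (x/2) = 1 by field_simp, Real.one_rpow]
  have e3 : Real.Gamma ((k:ℝ)+1) = (k.factorial : ℝ) := Real.Gamma_nat_eq_factorial k
  have e4 : Real.Gamma (v+1) = v * Real.Gamma v := Real.Gamma_add_one hv.ne'
  have hΓpos : (0:ℝ) < Real.Gamma ((k:ℝ)+v+1) := Real.Gamma_pos_of_pos (by positivity)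
  have hfac : ((k.factorial : ℝ)) ≠ 0 := by exact_mod_cast k.factorial_ne_zero
  rw [e1, e3, e4, hd]
  have : v * Real.Gamma v * (2/x)^v * ((-1:ℝ)^k * ((x/2)^(2*k) * (x/2)^v) /
      ((k.factorial : ℝ) * Real.Gamma ((k:ℝ)+v+1)))
      = ((2/x)^v * (x/2)^v) * (v * Real.Gamma v * ((-1:ℝ)^k * (x/2)^(2*k) /
      ((k.factorial : ℝ) * Real.Gamma ((k:ℝ)+v+1)))) := by ring
  rw [this, e2, one_mul]
  field_simp


/-- Conditional characteristic function of the random motion `X_m` at the Brownian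
sojourn time `Γ(t)`:
`∫_0^t Γ(v+1)(2/(αcs))^v J_v(αcs) (1/(π√(s(t−s)))) ds
 = (v/π) ∫_0^1 z^{−1/2}(1−z)^{−1/2} ∫_0^1 (1−w)^{v−1} J_0(αctz√w) dw dz`. -/
theorem stmt15 (v α c t : ℝ) (hv : 0 < v) (hα : 0 < α) (hc : 0 < c) (ht : 0 < t) :
    (∫ s in (0 : ℝ)..t,
      Real.Gamma (v + 1) * (2 / (α * c * s)) ^ v * besselJ v (α * c * s) *
        (1 / (π * Real.sqrt (s * (t - s))))) =
    v / π *
      ∫ z in (0 : ℝ)..1,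
        z ^ (-(1 : ℝ) / 2) * (1 - z) ^ (-(1 : ℝ) / 2) *
          ∫ w in (0 : ℝ)..1, (1 - w) ^ (v - 1) * besselJ 0 (α * c * t * z * Real.sqrt w) := by
  set f : ℝ → ℝ := fun s => Real.Gamma (v + 1) * (2 / (α * c * s)) ^ v * besselJ v (α * c * s) *
    (1 / (π * Real.sqrt (s * (t - s)))) with hf
  have h1 : (∫ s in (0:ℝ)..t, f s) = t • ∫ z in (0:ℝ)..1, f (t*z) := by
    have := intervalIntegral.smul_integral_comp_mul_left (a := (0:ℝ)) (b := 1) f t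
    rw [mul_zero, mul_one] at this
    exact this.symm
  rw [h1, ← intervalIntegral.integral_smul, ← intervalIntegral.integral_const_mul]
  apply intervalIntegral.integral_congr
  intro z hz
  rw [Set.uIcc_of_le (by norm_num : (0:ℝ) ≤ 1)] at hz
  show t • f (t*z) = v/π * (z^(-(1:ℝ)/2) * (1-z)^(-(1:ℝ)/2) *
    ∫ w in (0:ℝ)..1, (1-w)^(v-1) * besselJ 0 (α*c*t*z*Real.sqrt w))
  rcases eq_or_lt_of_le hz.1 with h0 | h0
  · rw [← h0]
    simp [hf, Real.zero_rpow hv.ne', Real.zero_rpow (by norm_num : -(1:ℝ)/2 ≠ 0)]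
  · rcases eq_or_lt_of_le hz.2 with h2 | h2
    · subst h2
      simp [hf, Real.zero_rpow (by norm_num : -(1:ℝ)/2 ≠ 0)]
    · have hX : 0 < α*c*t*z := by positivity
      have hson := sonine hv hX
      have ha : α*c*(t*z) = α*c*t*z := by ring
      have h1z : (0:ℝ) < 1 - z := by linarith
      have hsq : Real.sqrt (t*z*(t - t*z)) = t * (Real.sqrt z * Real.sqrt (1-z)) := by
        rw [show t*z*(t - t*z) = (t*t) * (z*(1-z)) by ring,
          Real.sqrt_mul (by positivity) _, Real.sqrt_mul_self ht.le,
          Real.sqrt_mul hz.1 _]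
      have hz2 : z^(-(1:ℝ)/2) = (Real.sqrt z)⁻¹ := by
        rw [show (-(1:ℝ)/2) = -(1/2) by norm_num, Real.rpow_neg hz.1, ← Real.sqrt_eq_rpow]
      have h1z2 : (1-z)^(-(1:ℝ)/2) = (Real.sqrt (1-z))⁻¹ := by
        rw [show (-(1:ℝ)/2) = -(1/2) by norm_num, Real.rpow_neg h1z.le, ← Real.sqrt_eq_rpow]
      have hsz : (0:ℝ) < Real.sqrt z := Real.sqrt_pos.mpr h0
      have hs1z : (0:ℝ) < Real.sqrt (1-z) := Real.sqrt_pos.mpr h1z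
      rw [smul_eq_mul, hf]
      simp only []
      rw [ha, hsq, hz2, h1z2, hson]
      have hπ := Real.pi_pos
      field_simp
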